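/- For the Schoen example (Δ = [-1,1] × T × T ⊆ ℝ⁵ with T the standard reflexive triangle Conv{(-1,-1),(2,-1),(-1,2)}, and nef-partition Δ₁ = [0,1] × T × {0}, Δ₂ = [-1,0] × {0} × T), the dual nef-partition data is ∇₁ = Conv{0, R⁻, S₀, S₁, S₂} and ∇₂ = Conv{0, R⁺, T₀, T₁, T₂}, and ∇ = ∇₁ + ∇₂ = Conv{R⁻ + T_j, R⁺ + S_i, S_i + T_j | i,j = 0,1,2}, where R^± = (±1,0,0,0,0), S₀ = (0,-1,-1,0,0), S₁ = (0,1,0,0,0), S₂ = (0,0,1,0,0), T₀ = (0,0,0,-1,-1), T₁ = (0,0,0,1,0), T₂ = (0,0,0,0,1). -/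

import Mathlib

open scoped Pointwise

namespace BB

abbrev V (n : ℕ) : Type := Fin n → ℝ

/-- The standard pairing between `M_ℝ` and `N_ℝ` (both identified with `ℝⁿ`). -/
def pair {n : ℕ} (m v : V n) : ℝ := ∑ i, m i * v i

/-- A point of `ℝⁿ` is a lattice point if all its coordinates are integers. -/
def IsLatticePt {n : ℕ} (m : V n) : Prop := ∀ i, ∃ z : ℤ, m i = (z : ℝ)

/-- A lattice polytope: convex hull of finitely many lattice points. -/
def IsLatticePolytope {n : ℕ} (P : Set (V n)) : Prop :=
  ∃ S : Finset (V n), (∀ m ∈ S, IsLatticePt m) ∧ P = convexHull ℝ (S : Set (V n))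

/-- The polar dual `P* = {v | ⟨m,v⟩ ≥ -1 for all m ∈ P}`. -/
def polar {n : ℕ} (P : Set (V n)) : Set (V n) := {v | ∀ m ∈ P, -1 ≤ pair m v}

/-- A reflexive polytope: a lattice polytope with `0` in its interior whose polar
dual is again a lattice polytope. -/
def IsReflexive {n : ℕ} (P : Set (V n)) : Prop :=
  IsLatticePolytope P ∧ (0 : V n) ∈ interior P ∧ IsLatticePolytope (polar P)

/-- The support function `supp P v = -inf{⟨m,v⟩ | m ∈ P}`; for `P = Δᵢ` and `v ∈ N_ℝ`
this is the piecewise linear function `φᵢ(v)` of the nef-partition. -/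
noncomputable def supp {n : ℕ} (P : Set (V n)) (v : V n) : ℝ :=
  sSup ((fun m => -(pair m v)) '' P)

end BB


namespace BB

/-- The standard reflexive triangle `T = Conv{(-1,-1),(2,-1),(-1,2)} ⊆ ℝ²`. -/
noncomputable def Ttri : Set (V 2) :=
  convexHull ℝ {![(-1 : ℝ), -1], ![2, -1], ![-1, 2]}

/-- `Δ = [-1,1] × T × T ⊆ ℝ⁵`. -/
noncomputable def Δ19 : Set (V 5) :=
  {v | v 0 ∈ Set.Icc (-1 : ℝ) 1 ∧ ![v 1, v 2] ∈ Ttri ∧ ![v 3, v 4] ∈ Ttri}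

/-- The nef-partition `Δ₁ = [0,1] × T × {0}`, `Δ₂ = [-1,0] × {0} × T`. -/
noncomputable def D19 : Fin 2 → Set (V 5) :=
  ![{v | v 0 ∈ Set.Icc (0 : ℝ) 1 ∧ ![v 1, v 2] ∈ Ttri ∧ v 3 = 0 ∧ v 4 = 0},
    {v | v 0 ∈ Set.Icc (-1 : ℝ) 0 ∧ v 1 = 0 ∧ v 2 = 0 ∧ ![v 3, v 4] ∈ Ttri}]

def Rp : V 5 := ![1, 0, 0, 0, 0]
def Rm : V 5 := ![-1, 0, 0, 0, 0]
def Spt : Fin 3 → V 5 := ![![0, -1, -1, 0, 0], ![0, 1, 0, 0, 0], ![0, 0, 1, 0, 0]]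
def Tpt : Fin 3 → V 5 := ![![0, 0, 0, -1, -1], ![0, 0, 0, 1, 0], ![0, 0, 0, 0, 1]]

/-- generic convex-combination membership -/
lemma mem_hull_combo {n k : ℕ} (w : Fin k → ℝ) (z : Fin k → V n) (s : Set (V n))
    (hz : ∀ i, z i ∈ s) (hw : ∀ i, 0 ≤ w i) (hsum : ∑ i, w i = 1) {x : V n}
    (hx : x = ∑ i, w i • z i) : x ∈ convexHull ℝ s := by
  have h := Finset.centerMass_mem_convexHull (Finset.univ : Finset (Fin k))
    (w := w) (fun i _ => hw i) (by rw [hsum]; norm_num) (z := z) (fun i _ => hz i)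
  rwa [Finset.centerMass, hsum, inv_one, one_smul, ← hx] at h

lemma mem_tri (a b c : ℝ) (ha : 0 ≤ a) (hb : 0 ≤ b) (hc : 0 ≤ c) (hsum : a + b + c = 1)
    {x : V 2} (hx : x = a • ![(-1 : ℝ), -1] + b • ![(2:ℝ), -1] + c • ![(-1:ℝ), 2]) :
    x ∈ Ttri := by
  refine mem_hull_combo ![a, b, c] ![![(-1 : ℝ), -1], ![2, -1], ![-1, 2]] _ ?_ ?_ ?_ ?_
  · intro i; fin_cases i <;> simp
  · intro i; fin_cases i <;> simpa
  · simp [Fin.sum_univ_three]; linarith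
  · rw [hx]; simp [Fin.sum_univ_three]

lemma T_vA : ![(-1:ℝ),-1] ∈ Ttri := subset_convexHull ℝ _ (by simp)
lemma T_vB : ![(2:ℝ),-1] ∈ Ttri := subset_convexHull ℝ _ (by simp)
lemma T_vC : ![(-1:ℝ),2] ∈ Ttri := subset_convexHull ℝ _ (by simp)
lemma T_00 : ![(0:ℝ),0] ∈ Ttri := by
  refine mem_tri (1/3) (1/3) (1/3) (by norm_num) (by norm_num) (by norm_num) (by norm_num) ?_
  funext i; fin_cases i <;> norm_num
lemma T_10 : ![(1:ℝ),0] ∈ Ttri := by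
  refine mem_tri 0 (2/3) (1/3) (by norm_num) (by norm_num) (by norm_num) (by norm_num) ?_
  funext i; fin_cases i <;> norm_num
lemma T_01 : ![(0:ℝ),1] ∈ Ttri := by
  refine mem_tri 0 (1/3) (2/3) (by norm_num) (by norm_num) (by norm_num) (by norm_num) ?_
  funext i; fin_cases i <;> norm_num
lemma T_m10 : ![(-1:ℝ),0] ∈ Ttri := by
  refine mem_tri (2/3) 0 (1/3) (by norm_num) (by norm_num) (by norm_num) (by norm_num) ?_
  funext i; fin_cases i <;> norm_num
lemma T_0m1 : ![(0:ℝ),-1] ∈ Ttri := by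
  refine mem_tri (2/3) (1/3) 0 (by norm_num) (by norm_num) (by norm_num) (by norm_num) ?_
  funext i; fin_cases i <;> norm_num

/-- linear upper bound over the triangle -/
lemma T_le (a b c : ℝ) (h1 : a*(-1)+b*(-1) ≤ c) (h2 : a*2+b*(-1) ≤ c) (h3 : a*(-1)+b*2 ≤ c)
    {w : V 2} (hw : w ∈ Ttri) : a * w 0 + b * w 1 ≤ c := by
  have hconv : Convex ℝ {w : V 2 | a * w 0 + b * w 1 ≤ c} := by
    refine convex_halfSpace_le (f := fun w : V 2 => a * w 0 + b * w 1) ⟨?_, ?_⟩ c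
    · intro x y; simp [Pi.add_apply]; ring
    · intro r x; simp [Pi.smul_apply, smul_eq_mul]; ring
  have h := convexHull_min (s := ({![(-1 : ℝ), -1], ![2, -1], ![-1, 2]} : Set (V 2)))
    (by rintro x (rfl|rfl|rfl) <;> simp <;> linarith) hconv
  exact h hw

lemma polar_ineq {v : V 5} (hv : v ∈ polar Δ19) (a b c d e : ℝ) (ha1 : -1 ≤ a) (ha2 : a ≤ 1)
    (hbc : ![b, c] ∈ Ttri) (hde : ![d, e] ∈ Ttri) :
    -1 ≤ a * v 0 + b * v 1 + c * v 2 + d * v 3 + e * v 4 := by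
  have h := hv ![a, b, c, d, e] ⟨by simpa using And.intro ha1 ha2, by simpa using hbc, by simpa using hde⟩
  simpa [pair, Fin.sum_univ_five] using h

lemma supp1_eq (v : V 5) :
    supp (D19 0) v
      = max 0 (-v 0) + max (v 1 + v 2) (max (-2*v 1 + v 2) (v 1 - 2*v 2)) := by
  apply IsGreatest.csSup_eq
  constructor
  · -- attained
    have step : ∀ hM : ℝ, (hM = 0 ∨ hM = -v 0) → (∃ mz : ℝ, (mz = 0 ∨ mz = 1) ∧ -(mz * v 0) = hM) →
        hM + max (v 1 + v 2) (max (-2*v 1 + v 2) (v 1 - 2*v 2)) ∈ (fun m => -pair m v) '' D19 0 := by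
      rintro hM _ ⟨mz, hmz01, hmzv⟩
      have hmz0 : (0:ℝ) ≤ mz := by rcases hmz01 with rfl | rfl <;> norm_num
      have hmz1 : mz ≤ (1:ℝ) := by rcases hmz01 with rfl | rfl <;> norm_num
      rcases max_cases (v 1 + v 2) (max (-2*v 1 + v 2) (v 1 - 2*v 2)) with ⟨hA, _⟩ | ⟨hA, _⟩
      · rw [hA]
        exact ⟨![mz, -1, -1, 0, 0], ⟨⟨hmz0, hmz1⟩, by simpa using T_vA, by simp, by simp⟩,
          by simp [pair, Fin.sum_univ_five]; rw [← hmzv]; ring⟩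
      · rcases max_cases (-2*v 1 + v 2) (v 1 - 2*v 2) with ⟨hB, _⟩ | ⟨hB, _⟩
        · rw [hA, hB]
          exact ⟨![mz, 2, -1, 0, 0], ⟨⟨hmz0, hmz1⟩, by simpa using T_vB, by simp, by simp⟩,
            by simp [pair, Fin.sum_univ_five]; rw [← hmzv]; ring⟩
        · rw [hA, hB]
          exact ⟨![mz, -1, 2, 0, 0], ⟨⟨hmz0, hmz1⟩, by simpa using T_vC, by simp, by simp⟩,
            by simp [pair, Fin.sum_univ_five]; rw [← hmzv]; ring⟩
    rcases le_total (v 0) 0 with h0 | h0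
    · rw [max_eq_right (by linarith : (0:ℝ) ≤ -v 0)]
      exact step _ (Or.inr rfl) ⟨1, Or.inr rfl, by ring⟩
    · rw [max_eq_left (by linarith : -v 0 ≤ (0:ℝ))]
      exact step _ (Or.inl rfl) ⟨0, Or.inl rfl, by ring⟩
  · -- upper bound
    rintro x ⟨m, hm, rfl⟩
    obtain ⟨hm0, hmT, hm3, hm4⟩ : m 0 ∈ Set.Icc (0:ℝ) 1 ∧ ![m 1, m 2] ∈ Ttri ∧ m 3 = 0 ∧ m 4 = 0 := by
      simpa [D19] using hm
    have h1 : -(m 0 * v 0) ≤ max 0 (-v 0) := by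
      rcases le_total 0 (v 0) with h | h
      · have : -(m 0 * v 0) ≤ 0 := by nlinarith [hm0.1, hm0.2]
        exact this.trans (le_max_left _ _)
      · have : -(m 0 * v 0) ≤ -v 0 := by nlinarith [hm0.1, hm0.2]
        exact this.trans (le_max_right _ _)
    have h2 := T_le (-v 1) (-v 2) (max (v 1 + v 2) (max (-2*v 1 + v 2) (v 1 - 2*v 2)))
      (by linarith [le_max_left (v 1 + v 2) (max (-2*v 1 + v 2) (v 1 - 2*v 2))])
      (by linarith [le_max_left (-2*v 1 + v 2) (v 1 - 2*v 2),
           le_max_right (v 1 + v 2) (max (-2*v 1 + v 2) (v 1 - 2*v 2))])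
      (by linarith [le_max_right (-2*v 1 + v 2) (v 1 - 2*v 2),
           le_max_right (v 1 + v 2) (max (-2*v 1 + v 2) (v 1 - 2*v 2))])
      hmT
    simp only [Matrix.cons_val_zero, Matrix.cons_val_one, Matrix.head_cons] at h2
    simp only [pair, Fin.sum_univ_five, hm3, hm4]
    linarith

lemma supp2_eq (v : V 5) :
    supp (D19 1) v
      = max 0 (v 0) + max (v 3 + v 4) (max (-2*v 3 + v 4) (v 3 - 2*v 4)) := by
  apply IsGreatest.csSup_eq
  constructor
  · have step : ∀ hM : ℝ, (∃ mz : ℝ, (mz = 0 ∨ mz = -1) ∧ -(mz * v 0) = hM) →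
        hM + max (v 3 + v 4) (max (-2*v 3 + v 4) (v 3 - 2*v 4)) ∈ (fun m => -pair m v) '' D19 1 := by
      rintro hM ⟨mz, hmz01, hmzv⟩
      have hmz0 : (-1:ℝ) ≤ mz := by rcases hmz01 with rfl | rfl <;> norm_num
      have hmz1 : mz ≤ (0:ℝ) := by rcases hmz01 with rfl | rfl <;> norm_num
      rcases max_cases (v 3 + v 4) (max (-2*v 3 + v 4) (v 3 - 2*v 4)) with ⟨hA, _⟩ | ⟨hA, _⟩
      · rw [hA]
        exact ⟨![mz, 0, 0, -1, -1], ⟨⟨hmz0, hmz1⟩, by simp, by simp, by simpa using T_vA⟩,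
          by simp [pair, Fin.sum_univ_five]; rw [← hmzv]; ring⟩
      · rcases max_cases (-2*v 3 + v 4) (v 3 - 2*v 4) with ⟨hB, _⟩ | ⟨hB, _⟩
        · rw [hA, hB]
          exact ⟨![mz, 0, 0, 2, -1], ⟨⟨hmz0, hmz1⟩, by simp, by simp, by simpa using T_vB⟩,
            by simp [pair, Fin.sum_univ_five]; rw [← hmzv]; ring⟩
        · rw [hA, hB]
          exact ⟨![mz, 0, 0, -1, 2], ⟨⟨hmz0, hmz1⟩, by simp, by simp, by simpa using T_vC⟩,
            by simp [pair, Fin.sum_univ_five]; rw [← hmzv]; ring⟩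
    rcases le_total 0 (v 0) with h0 | h0
    · rw [max_eq_right (by linarith : (0:ℝ) ≤ v 0)]
      exact step _ ⟨-1, Or.inr rfl, by ring⟩
    · rw [max_eq_left (by linarith : v 0 ≤ (0:ℝ))]
      exact step _ ⟨0, Or.inl rfl, by ring⟩
  · rintro x ⟨m, hm, rfl⟩
    obtain ⟨hm0, hm1, hm2, hmT⟩ : m 0 ∈ Set.Icc (-1:ℝ) 0 ∧ m 1 = 0 ∧ m 2 = 0 ∧ ![m 3, m 4] ∈ Ttri := by
      simpa [D19] using hm
    have h1 : -(m 0 * v 0) ≤ max 0 (v 0) := by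
      rcases le_total 0 (v 0) with h | h
      · have : -(m 0 * v 0) ≤ v 0 := by nlinarith [hm0.1, hm0.2]
        exact this.trans (le_max_right _ _)
      · have : -(m 0 * v 0) ≤ 0 := by nlinarith [hm0.1, hm0.2]
        exact this.trans (le_max_left _ _)
    have h2 := T_le (-v 3) (-v 4) (max (v 3 + v 4) (max (-2*v 3 + v 4) (v 3 - 2*v 4)))
      (by linarith [le_max_left (v 3 + v 4) (max (-2*v 3 + v 4) (v 3 - 2*v 4))])
      (by linarith [le_max_left (-2*v 3 + v 4) (v 3 - 2*v 4),
           le_max_right (v 3 + v 4) (max (-2*v 3 + v 4) (v 3 - 2*v 4))])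
      (by linarith [le_max_right (-2*v 3 + v 4) (v 3 - 2*v 4),
           le_max_right (v 3 + v 4) (max (-2*v 3 + v 4) (v 3 - 2*v 4))])
      hmT
    simp only [Matrix.cons_val_zero, Matrix.cons_val_one, Matrix.head_cons] at h2
    simp only [pair, Fin.sum_univ_five, hm1, hm2]
    linarith

-- uniqueness lemmas
lemma uRm {v : V 5} (hv : v ∈ polar Δ19) (h0 : v 0 = -1) : v = Rm := by
  have i1 := polar_ineq hv 1 (-1) (-1) 0 0 (by norm_num) (by norm_num) T_vA T_00
  have i2 := polar_ineq hv 1 2 (-1) 0 0 (by norm_num) (by norm_num) T_vB T_00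
  have i3 := polar_ineq hv 1 (-1) 2 0 0 (by norm_num) (by norm_num) T_vC T_00
  have i4 := polar_ineq hv 1 0 0 (-1) (-1) (by norm_num) (by norm_num) T_00 T_vA
  have i5 := polar_ineq hv 1 0 0 2 (-1) (by norm_num) (by norm_num) T_00 T_vB
  have i6 := polar_ineq hv 1 0 0 (-1) 2 (by norm_num) (by norm_num) T_00 T_vC
  funext j; fin_cases j <;> simp [Rm] <;> linarith

lemma uRp {v : V 5} (hv : v ∈ polar Δ19) (h0 : v 0 = 1) : v = Rp := by
  have i1 := polar_ineq hv (-1) (-1) (-1) 0 0 (by norm_num) (by norm_num) T_vA T_00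
  have i2 := polar_ineq hv (-1) 2 (-1) 0 0 (by norm_num) (by norm_num) T_vB T_00
  have i3 := polar_ineq hv (-1) (-1) 2 0 0 (by norm_num) (by norm_num) T_vC T_00
  have i4 := polar_ineq hv (-1) 0 0 (-1) (-1) (by norm_num) (by norm_num) T_00 T_vA
  have i5 := polar_ineq hv (-1) 0 0 2 (-1) (by norm_num) (by norm_num) T_00 T_vB
  have i6 := polar_ineq hv (-1) 0 0 (-1) 2 (by norm_num) (by norm_num) T_00 T_vC
  funext j; fin_cases j <;> simp [Rp] <;> linarith

lemma uS0 {v : V 5} (hv : v ∈ polar Δ19) (h0 : v 1 = -1) : v = Spt 0 := by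
  have i1 := polar_ineq hv 0 2 (-1) 0 0 (by norm_num) (by norm_num) T_vB T_00
  have i2 := polar_ineq hv 0 0 1 0 0 (by norm_num) (by norm_num) T_01 T_00
  have i3 := polar_ineq hv 1 1 0 0 0 (by norm_num) (by norm_num) T_10 T_00
  have i4 := polar_ineq hv (-1) 1 0 0 0 (by norm_num) (by norm_num) T_10 T_00
  have i5 := polar_ineq hv 0 1 0 (-1) (-1) (by norm_num) (by norm_num) T_10 T_vA
  have i6 := polar_ineq hv 0 1 0 2 (-1) (by norm_num) (by norm_num) T_10 T_vB
  have i7 := polar_ineq hv 0 1 0 (-1) 2 (by norm_num) (by norm_num) T_10 T_vC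
  funext j; fin_cases j <;> simp [Spt, Matrix.vecHead, Matrix.vecTail] <;> linarith

lemma uS1 {v : V 5} (hv : v ∈ polar Δ19) (h0 : v 1 = 1) : v = Spt 1 := by
  have i1 := polar_ineq hv 0 (-1) (-1) 0 0 (by norm_num) (by norm_num) T_vA T_00
  have i2 := polar_ineq hv 0 (-1) 2 0 0 (by norm_num) (by norm_num) T_vC T_00
  have i3 := polar_ineq hv 1 (-1) 0 0 0 (by norm_num) (by norm_num) T_m10 T_00
  have i4 := polar_ineq hv (-1) (-1) 0 0 0 (by norm_num) (by norm_num) T_m10 T_00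
  have i5 := polar_ineq hv 0 (-1) 0 (-1) (-1) (by norm_num) (by norm_num) T_m10 T_vA
  have i6 := polar_ineq hv 0 (-1) 0 2 (-1) (by norm_num) (by norm_num) T_m10 T_vB
  have i7 := polar_ineq hv 0 (-1) 0 (-1) 2 (by norm_num) (by norm_num) T_m10 T_vC
  funext j; fin_cases j <;> simp [Spt, Matrix.vecHead, Matrix.vecTail] <;> linarith

lemma uS2 {v : V 5} (hv : v ∈ polar Δ19) (h0 : v 2 = 1) : v = Spt 2 := by
  have i1 := polar_ineq hv 0 (-1) (-1) 0 0 (by norm_num) (by norm_num) T_vA T_00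
  have i2 := polar_ineq hv 0 2 (-1) 0 0 (by norm_num) (by norm_num) T_vB T_00
  have i3 := polar_ineq hv 1 0 (-1) 0 0 (by norm_num) (by norm_num) T_0m1 T_00
  have i4 := polar_ineq hv (-1) 0 (-1) 0 0 (by norm_num) (by norm_num) T_0m1 T_00
  have i5 := polar_ineq hv 0 0 (-1) (-1) (-1) (by norm_num) (by norm_num) T_0m1 T_vA
  have i6 := polar_ineq hv 0 0 (-1) 2 (-1) (by norm_num) (by norm_num) T_0m1 T_vB
  have i7 := polar_ineq hv 0 0 (-1) (-1) 2 (by norm_num) (by norm_num) T_0m1 T_vC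
  funext j; fin_cases j <;> simp [Spt, Matrix.vecHead, Matrix.vecTail] <;> linarith

lemma uT0 {v : V 5} (hv : v ∈ polar Δ19) (h0 : v 3 = -1) : v = Tpt 0 := by
  have i1 := polar_ineq hv 0 0 0 2 (-1) (by norm_num) (by norm_num) T_00 T_vB
  have i2 := polar_ineq hv 0 0 0 0 1 (by norm_num) (by norm_num) T_00 T_01
  have i3 := polar_ineq hv 1 0 0 1 0 (by norm_num) (by norm_num) T_00 T_10
  have i4 := polar_ineq hv (-1) 0 0 1 0 (by norm_num) (by norm_num) T_00 T_10
  have i5 := polar_ineq hv 0 (-1) (-1) 1 0 (by norm_num) (by norm_num) T_vA T_10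
  have i6 := polar_ineq hv 0 2 (-1) 1 0 (by norm_num) (by norm_num) T_vB T_10
  have i7 := polar_ineq hv 0 (-1) 2 1 0 (by norm_num) (by norm_num) T_vC T_10
  funext j; fin_cases j <;> simp [Tpt, Matrix.vecHead, Matrix.vecTail] <;> linarith

lemma uT1 {v : V 5} (hv : v ∈ polar Δ19) (h0 : v 3 = 1) : v = Tpt 1 := by
  have i1 := polar_ineq hv 0 0 0 (-1) (-1) (by norm_num) (by norm_num) T_00 T_vA
  have i2 := polar_ineq hv 0 0 0 (-1) 2 (by norm_num) (by norm_num) T_00 T_vC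
  have i3 := polar_ineq hv 1 0 0 (-1) 0 (by norm_num) (by norm_num) T_00 T_m10
  have i4 := polar_ineq hv (-1) 0 0 (-1) 0 (by norm_num) (by norm_num) T_00 T_m10
  have i5 := polar_ineq hv 0 (-1) (-1) (-1) 0 (by norm_num) (by norm_num) T_vA T_m10
  have i6 := polar_ineq hv 0 2 (-1) (-1) 0 (by norm_num) (by norm_num) T_vB T_m10
  have i7 := polar_ineq hv 0 (-1) 2 (-1) 0 (by norm_num) (by norm_num) T_vC T_m10
  funext j; fin_cases j <;> simp [Tpt, Matrix.vecHead, Matrix.vecTail] <;> linarith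

lemma uT2 {v : V 5} (hv : v ∈ polar Δ19) (h0 : v 4 = 1) : v = Tpt 2 := by
  have i1 := polar_ineq hv 0 0 0 (-1) (-1) (by norm_num) (by norm_num) T_00 T_vA
  have i2 := polar_ineq hv 0 0 0 2 (-1) (by norm_num) (by norm_num) T_00 T_vB
  have i3 := polar_ineq hv 1 0 0 0 (-1) (by norm_num) (by norm_num) T_00 T_0m1
  have i4 := polar_ineq hv (-1) 0 0 0 (-1) (by norm_num) (by norm_num) T_00 T_0m1
  have i5 := polar_ineq hv 0 (-1) (-1) 0 (-1) (by norm_num) (by norm_num) T_vA T_0m1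
  have i6 := polar_ineq hv 0 2 (-1) 0 (-1) (by norm_num) (by norm_num) T_vB T_0m1
  have i7 := polar_ineq hv 0 (-1) 2 0 (-1) (by norm_num) (by norm_num) T_vC T_0m1
  funext j; fin_cases j <;> simp [Tpt, Matrix.vecHead, Matrix.vecTail] <;> linarith

-- linearity of pair
lemma pair_combo {n : ℕ} (m x y : V n) (a b : ℝ) :
    pair m (a • x + b • y) = a * pair m x + b * pair m y := by
  unfold pair
  rw [Finset.mul_sum, Finset.mul_sum, ← Finset.sum_add_distrib]
  refine Finset.sum_congr rfl fun i _ => ?_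
  simp [Pi.add_apply, Pi.smul_apply, smul_eq_mul]; ring

lemma extreme_of_face {v : V 5} (m : V 5) (hm : m ∈ Δ19) (hval : pair m v = -1)
    (huniq : ∀ w ∈ polar Δ19, pair m w = -1 → w = v) (hvmem : v ∈ polar Δ19) :
    v ∈ Set.extremePoints ℝ (polar Δ19) := by
  refine mem_extremePoints.2 ⟨hvmem, fun x₁ h₁ x₂ h₂ hseg => ?_⟩
  obtain ⟨a, b, ha, hb, hab, hsum⟩ := hseg
  have hc : a * pair m x₁ + b * pair m x₂ = -1 := by
    rw [← pair_combo, hsum, hval]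
  have e1 := h₁ m hm
  have e2 := h₂ m hm
  have k1 : pair m x₁ = -1 := by nlinarith
  have k2 : pair m x₂ = -1 := by nlinarith
  exact ⟨huniq x₁ h₁ k1, huniq x₂ h₂ k2⟩


lemma max3_cases (x y z : ℝ) : max x (max y z) = x ∨ max x (max y z) = y ∨ max x (max y z) = z := by
  rcases max_cases x (max y z) with ⟨h,_⟩|⟨h,_⟩
  · exact Or.inl h
  · rcases max_cases y z with ⟨h2,_⟩|⟨h2,_⟩
    · exact Or.inr (Or.inl (h.trans h2))
    · exact Or.inr (Or.inr (h.trans h2))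

lemma face1 {v : V 5} (hv : v ∈ polar Δ19) (hs : supp (D19 0) v = 1) :
    v ∈ convexHull ℝ {Rm, Spt 0, Spt 1, Spt 2} := by
  rw [supp1_eq] at hs
  have hpAA := polar_ineq hv 1 (-1) (-1) (-1) (-1) (by norm_num) (by norm_num) T_vA T_vA
  have hpAB := polar_ineq hv 1 (-1) (-1) 2 (-1) (by norm_num) (by norm_num) T_vA T_vB
  have hpAC := polar_ineq hv 1 (-1) (-1) (-1) 2 (by norm_num) (by norm_num) T_vA T_vC
  have hpBA := polar_ineq hv 1 2 (-1) (-1) (-1) (by norm_num) (by norm_num) T_vB T_vA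
  have hpBB := polar_ineq hv 1 2 (-1) 2 (-1) (by norm_num) (by norm_num) T_vB T_vB
  have hpBC := polar_ineq hv 1 2 (-1) (-1) 2 (by norm_num) (by norm_num) T_vB T_vC
  have hpCA := polar_ineq hv 1 (-1) 2 (-1) (-1) (by norm_num) (by norm_num) T_vC T_vA
  have hpCB := polar_ineq hv 1 (-1) 2 2 (-1) (by norm_num) (by norm_num) T_vC T_vB
  have hpCC := polar_ineq hv 1 (-1) 2 (-1) 2 (by norm_num) (by norm_num) T_vC T_vC
  have hmAA := polar_ineq hv (-1) (-1) (-1) (-1) (-1) (by norm_num) (by norm_num) T_vA T_vA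
  have hmAB := polar_ineq hv (-1) (-1) (-1) 2 (-1) (by norm_num) (by norm_num) T_vA T_vB
  have hmAC := polar_ineq hv (-1) (-1) (-1) (-1) 2 (by norm_num) (by norm_num) T_vA T_vC
  have hmBA := polar_ineq hv (-1) 2 (-1) (-1) (-1) (by norm_num) (by norm_num) T_vB T_vA
  have hmBB := polar_ineq hv (-1) 2 (-1) 2 (-1) (by norm_num) (by norm_num) T_vB T_vB
  have hmBC := polar_ineq hv (-1) 2 (-1) (-1) 2 (by norm_num) (by norm_num) T_vB T_vC
  have hmCA := polar_ineq hv (-1) (-1) 2 (-1) (-1) (by norm_num) (by norm_num) T_vC T_vA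
  have hmCB := polar_ineq hv (-1) (-1) 2 2 (-1) (by norm_num) (by norm_num) T_vC T_vB
  have hmCC := polar_ineq hv (-1) (-1) 2 (-1) 2 (by norm_num) (by norm_num) T_vC T_vC
  have hM : max 0 (-v 0) = 0 ∨ max 0 (-v 0) = -v 0 := by
    rcases max_cases 0 (-v 0) with ⟨h,_⟩|⟨h,_⟩
    exacts [Or.inl h, Or.inr h]
  have hA := max3_cases (v 1 + v 2) (-2*v 1 + v 2) (v 1 - 2*v 2)
  have hB := max3_cases (v 3 + v 4) (-2*v 3 + v 4) (v 3 - 2*v 4)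
  have hB1 := le_max_left (v 3 + v 4) (max (-2*v 3 + v 4) (v 3 - 2*v 4))
  have hB2 := (le_max_left (-2*v 3 + v 4) (v 3 - 2*v 4)).trans
    (le_max_right (v 3 + v 4) (max (-2*v 3 + v 4) (v 3 - 2*v 4)))
  have hB3 := (le_max_right (-2*v 3 + v 4) (v 3 - 2*v 4)).trans
    (le_max_right (v 3 + v 4) (max (-2*v 3 + v 4) (v 3 - 2*v 4)))
  have key : v 0 ≤ 0 ∧ v 3 = 0 ∧ v 4 = 0 := by
    rcases hM with h0|h0 <;> rcases hA with hA'|hA'|hA' <;> rcases hB with hB'|hB'|hB' <;>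
      exact ⟨by linarith, by linarith, by linarith⟩
  obtain ⟨h0, h3, h4⟩ := key
  have hA1 := le_max_left (v 1 + v 2) (max (-2*v 1 + v 2) (v 1 - 2*v 2))
  have hA2 := (le_max_left (-2*v 1 + v 2) (v 1 - 2*v 2)).trans
    (le_max_right (v 1 + v 2) (max (-2*v 1 + v 2) (v 1 - 2*v 2)))
  have hA3 := (le_max_right (-2*v 1 + v 2) (v 1 - 2*v 2)).trans
    (le_max_right (v 1 + v 2) (max (-2*v 1 + v 2) (v 1 - 2*v 2)))
  rw [max_eq_right (by linarith : (0:ℝ) ≤ -v 0)] at hs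
  refine mem_hull_combo
    ![-v 0, (1 + v 0 - (v 1 + v 2))/3, (1 + v 0 - (-2*v 1 + v 2))/3, (1 + v 0 - (v 1 - 2*v 2))/3]
    ![Rm, Spt 0, Spt 1, Spt 2] _ ?_ ?_ ?_ ?_
  · intro i; fin_cases i <;> simp
  · intro i; fin_cases i <;> simp <;> linarith
  · simp [Fin.sum_univ_four]; ring
  · funext r; fin_cases r <;>
      simp [Fin.sum_univ_four, Rm, Spt, Matrix.vecHead, Matrix.vecTail] <;> linarith

lemma face2 {v : V 5} (hv : v ∈ polar Δ19) (hs : supp (D19 1) v = 1) :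
    v ∈ convexHull ℝ {Rp, Tpt 0, Tpt 1, Tpt 2} := by
  rw [supp2_eq] at hs
  have hpAA := polar_ineq hv 1 (-1) (-1) (-1) (-1) (by norm_num) (by norm_num) T_vA T_vA
  have hpAB := polar_ineq hv 1 (-1) (-1) 2 (-1) (by norm_num) (by norm_num) T_vA T_vB
  have hpAC := polar_ineq hv 1 (-1) (-1) (-1) 2 (by norm_num) (by norm_num) T_vA T_vC
  have hpBA := polar_ineq hv 1 2 (-1) (-1) (-1) (by norm_num) (by norm_num) T_vB T_vA
  have hpBB := polar_ineq hv 1 2 (-1) 2 (-1) (by norm_num) (by norm_num) T_vB T_vB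
  have hpBC := polar_ineq hv 1 2 (-1) (-1) 2 (by norm_num) (by norm_num) T_vB T_vC
  have hpCA := polar_ineq hv 1 (-1) 2 (-1) (-1) (by norm_num) (by norm_num) T_vC T_vA
  have hpCB := polar_ineq hv 1 (-1) 2 2 (-1) (by norm_num) (by norm_num) T_vC T_vB
  have hpCC := polar_ineq hv 1 (-1) 2 (-1) 2 (by norm_num) (by norm_num) T_vC T_vC
  have hmAA := polar_ineq hv (-1) (-1) (-1) (-1) (-1) (by norm_num) (by norm_num) T_vA T_vA
  have hmAB := polar_ineq hv (-1) (-1) (-1) 2 (-1) (by norm_num) (by norm_num) T_vA T_vB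
  have hmAC := polar_ineq hv (-1) (-1) (-1) (-1) 2 (by norm_num) (by norm_num) T_vA T_vC
  have hmBA := polar_ineq hv (-1) 2 (-1) (-1) (-1) (by norm_num) (by norm_num) T_vB T_vA
  have hmBB := polar_ineq hv (-1) 2 (-1) 2 (-1) (by norm_num) (by norm_num) T_vB T_vB
  have hmBC := polar_ineq hv (-1) 2 (-1) (-1) 2 (by norm_num) (by norm_num) T_vB T_vC
  have hmCA := polar_ineq hv (-1) (-1) 2 (-1) (-1) (by norm_num) (by norm_num) T_vC T_vA
  have hmCB := polar_ineq hv (-1) (-1) 2 2 (-1) (by norm_num) (by norm_num) T_vC T_vB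
  have hmCC := polar_ineq hv (-1) (-1) 2 (-1) 2 (by norm_num) (by norm_num) T_vC T_vC
  have hM : max 0 (v 0) = 0 ∨ max 0 (v 0) = v 0 := by
    rcases max_cases 0 (v 0) with ⟨h,_⟩|⟨h,_⟩
    exacts [Or.inl h, Or.inr h]
  have hA := max3_cases (v 3 + v 4) (-2*v 3 + v 4) (v 3 - 2*v 4)
  have hB := max3_cases (v 1 + v 2) (-2*v 1 + v 2) (v 1 - 2*v 2)
  have hB1 := le_max_left (v 1 + v 2) (max (-2*v 1 + v 2) (v 1 - 2*v 2))
  have hB2 := (le_max_left (-2*v 1 + v 2) (v 1 - 2*v 2)).trans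
    (le_max_right (v 1 + v 2) (max (-2*v 1 + v 2) (v 1 - 2*v 2)))
  have hB3 := (le_max_right (-2*v 1 + v 2) (v 1 - 2*v 2)).trans
    (le_max_right (v 1 + v 2) (max (-2*v 1 + v 2) (v 1 - 2*v 2)))
  have key : 0 ≤ v 0 ∧ v 1 = 0 ∧ v 2 = 0 := by
    rcases hM with h0|h0 <;> rcases hA with hA'|hA'|hA' <;> rcases hB with hB'|hB'|hB' <;>
      exact ⟨by linarith, by linarith, by linarith⟩
  obtain ⟨h0, h1, h2⟩ := key
  have hA1 := le_max_left (v 3 + v 4) (max (-2*v 3 + v 4) (v 3 - 2*v 4))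
  have hA2 := (le_max_left (-2*v 3 + v 4) (v 3 - 2*v 4)).trans
    (le_max_right (v 3 + v 4) (max (-2*v 3 + v 4) (v 3 - 2*v 4)))
  have hA3 := (le_max_right (-2*v 3 + v 4) (v 3 - 2*v 4)).trans
    (le_max_right (v 3 + v 4) (max (-2*v 3 + v 4) (v 3 - 2*v 4)))
  rw [max_eq_right (by linarith : (0:ℝ) ≤ v 0)] at hs
  refine mem_hull_combo
    ![v 0, (1 - v 0 - (v 3 + v 4))/3, (1 - v 0 - (-2*v 3 + v 4))/3, (1 - v 0 - (v 3 - 2*v 4))/3]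
    ![Rp, Tpt 0, Tpt 1, Tpt 2] _ ?_ ?_ ?_ ?_
  · intro i; fin_cases i <;> simp
  · intro i; fin_cases i <;> simp <;> linarith
  · simp [Fin.sum_univ_four]; ring
  · funext r; fin_cases r <;>
      simp [Fin.sum_univ_four, Rp, Tpt, Matrix.vecHead, Matrix.vecTail] <;> linarith

-- polar membership of the eight vertices
lemma Rm_polar : Rm ∈ polar Δ19 := by
  rintro m ⟨⟨h1, h2⟩, hT1, hT2⟩
  simp [pair, Fin.sum_univ_five, Rm]
  linarith

lemma Rp_polar : Rp ∈ polar Δ19 := by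
  rintro m ⟨⟨h1, h2⟩, hT1, hT2⟩
  simp [pair, Fin.sum_univ_five, Rp]
  linarith

lemma S0_polar : Spt 0 ∈ polar Δ19 := by
  rintro m ⟨_, hT1, _⟩
  have h := T_le 1 1 1 (by norm_num) (by norm_num) (by norm_num) hT1
  simp at h
  simp [pair, Fin.sum_univ_five, Spt, Matrix.vecHead, Matrix.vecTail]
  linarith

lemma S1_polar : Spt 1 ∈ polar Δ19 := by
  rintro m ⟨_, hT1, _⟩
  have h := T_le (-1) 0 1 (by norm_num) (by norm_num) (by norm_num) hT1
  simp at h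
  simp [pair, Fin.sum_univ_five, Spt, Matrix.vecHead, Matrix.vecTail]
  linarith

lemma S2_polar : Spt 2 ∈ polar Δ19 := by
  rintro m ⟨_, hT1, _⟩
  have h := T_le 0 (-1) 1 (by norm_num) (by norm_num) (by norm_num) hT1
  simp at h
  simp [pair, Fin.sum_univ_five, Spt, Matrix.vecHead, Matrix.vecTail]
  linarith

lemma T0_polar : Tpt 0 ∈ polar Δ19 := by
  rintro m ⟨_, _, hT2⟩
  have h := T_le 1 1 1 (by norm_num) (by norm_num) (by norm_num) hT2
  simp at h
  simp [pair, Fin.sum_univ_five, Tpt, Matrix.vecHead, Matrix.vecTail]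
  linarith

lemma T1_polar : Tpt 1 ∈ polar Δ19 := by
  rintro m ⟨_, _, hT2⟩
  have h := T_le (-1) 0 1 (by norm_num) (by norm_num) (by norm_num) hT2
  simp at h
  simp [pair, Fin.sum_univ_five, Tpt, Matrix.vecHead, Matrix.vecTail]
  linarith

lemma T2_polar : Tpt 2 ∈ polar Δ19 := by
  rintro m ⟨_, _, hT2⟩
  have h := T_le 0 (-1) 1 (by norm_num) (by norm_num) (by norm_num) hT2
  simp at h
  simp [pair, Fin.sum_univ_five, Tpt, Matrix.vecHead, Matrix.vecTail]
  linarith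

-- extreme points
lemma Rm_ext : Rm ∈ Set.extremePoints ℝ (polar Δ19) := by
  refine extreme_of_face ![1, 0, 0, 0, 0]
    ⟨by norm_num, by simpa using T_00, by simpa using T_00⟩
    (by simp [pair, Fin.sum_univ_five, Rm]) (fun w hw hpw => uRm hw ?_) Rm_polar
  simpa [pair, Fin.sum_univ_five] using hpw

lemma Rp_ext : Rp ∈ Set.extremePoints ℝ (polar Δ19) := by
  refine extreme_of_face ![-1, 0, 0, 0, 0]
    ⟨by norm_num, by simpa using T_00, by simpa using T_00⟩
    (by simp [pair, Fin.sum_univ_five, Rp]) (fun w hw hpw => uRp hw ?_) Rp_polar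
  have : -w 0 = -1 := by simpa [pair, Fin.sum_univ_five] using hpw
  linarith

lemma S0_ext : Spt 0 ∈ Set.extremePoints ℝ (polar Δ19) := by
  refine extreme_of_face ![0, 1, 0, 0, 0]
    ⟨by norm_num, by simpa using T_10, by simpa using T_00⟩
    (by simp [pair, Fin.sum_univ_five, Spt, Matrix.vecHead, Matrix.vecTail])
    (fun w hw hpw => uS0 hw ?_) S0_polar
  simpa [pair, Fin.sum_univ_five] using hpw

lemma S1_ext : Spt 1 ∈ Set.extremePoints ℝ (polar Δ19) := by
  refine extreme_of_face ![0, -1, 0, 0, 0]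
    ⟨by norm_num, by simpa using T_m10, by simpa using T_00⟩
    (by simp [pair, Fin.sum_univ_five, Spt, Matrix.vecHead, Matrix.vecTail])
    (fun w hw hpw => uS1 hw ?_) S1_polar
  have : -w 1 = -1 := by simpa [pair, Fin.sum_univ_five] using hpw
  linarith

lemma S2_ext : Spt 2 ∈ Set.extremePoints ℝ (polar Δ19) := by
  refine extreme_of_face ![0, 0, -1, 0, 0]
    ⟨by norm_num, by simpa using T_0m1, by simpa using T_00⟩
    (by simp [pair, Fin.sum_univ_five, Spt, Matrix.vecHead, Matrix.vecTail])
    (fun w hw hpw => uS2 hw ?_) S2_polar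
  have : -w 2 = -1 := by simpa [pair, Fin.sum_univ_five] using hpw
  linarith

lemma T0_ext : Tpt 0 ∈ Set.extremePoints ℝ (polar Δ19) := by
  refine extreme_of_face ![0, 0, 0, 1, 0]
    ⟨by norm_num, by simpa using T_00, by simpa using T_10⟩
    (by simp [pair, Fin.sum_univ_five, Tpt, Matrix.vecHead, Matrix.vecTail])
    (fun w hw hpw => uT0 hw ?_) T0_polar
  simpa [pair, Fin.sum_univ_five] using hpw

lemma T1_ext : Tpt 1 ∈ Set.extremePoints ℝ (polar Δ19) := by
  refine extreme_of_face ![0, 0, 0, -1, 0]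
    ⟨by norm_num, by simpa using T_00, by simpa using T_m10⟩
    (by simp [pair, Fin.sum_univ_five, Tpt, Matrix.vecHead, Matrix.vecTail])
    (fun w hw hpw => uT1 hw ?_) T1_polar
  have : -w 3 = -1 := by simpa [pair, Fin.sum_univ_five] using hpw
  linarith

lemma T2_ext : Tpt 2 ∈ Set.extremePoints ℝ (polar Δ19) := by
  refine extreme_of_face ![0, 0, 0, 0, -1]
    ⟨by norm_num, by simpa using T_00, by simpa using T_0m1⟩
    (by simp [pair, Fin.sum_univ_five, Tpt, Matrix.vecHead, Matrix.vecTail])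
    (fun w hw hpw => uT2 hw ?_) T2_polar
  have : -w 4 = -1 := by simpa [pair, Fin.sum_univ_five] using hpw
  linarith

-- supp values
lemma supp_Rm : supp (D19 0) Rm = 1 := by rw [supp1_eq]; norm_num [Rm, max_def, Matrix.vecHead, Matrix.vecTail, Matrix.cons_val_two, Matrix.cons_val_three, Matrix.cons_val_four]
lemma supp_S0 : supp (D19 0) (Spt 0) = 1 := by
  rw [supp1_eq]; norm_num [Spt, Matrix.vecHead, Matrix.vecTail, max_def, Matrix.cons_val_two, Matrix.cons_val_three, Matrix.cons_val_four]
lemma supp_S1 : supp (D19 0) (Spt 1) = 1 := by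
  rw [supp1_eq]; norm_num [Spt, Matrix.vecHead, Matrix.vecTail, max_def, Matrix.cons_val_two, Matrix.cons_val_three, Matrix.cons_val_four]
lemma supp_S2 : supp (D19 0) (Spt 2) = 1 := by
  rw [supp1_eq]; norm_num [Spt, Matrix.vecHead, Matrix.vecTail, max_def, Matrix.cons_val_two, Matrix.cons_val_three, Matrix.cons_val_four]
lemma supp_Rp : supp (D19 1) Rp = 1 := by rw [supp2_eq]; norm_num [Rp, max_def, Matrix.vecHead, Matrix.vecTail, Matrix.cons_val_two, Matrix.cons_val_three, Matrix.cons_val_four]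
lemma supp_T0 : supp (D19 1) (Tpt 0) = 1 := by
  rw [supp2_eq]; norm_num [Tpt, Matrix.vecHead, Matrix.vecTail, max_def, Matrix.cons_val_two, Matrix.cons_val_three, Matrix.cons_val_four]
lemma supp_T1 : supp (D19 1) (Tpt 1) = 1 := by
  rw [supp2_eq]; norm_num [Tpt, Matrix.vecHead, Matrix.vecTail, max_def, Matrix.cons_val_two, Matrix.cons_val_three, Matrix.cons_val_four]
lemma supp_T2 : supp (D19 1) (Tpt 2) = 1 := by
  rw [supp2_eq]; norm_num [Tpt, Matrix.vecHead, Matrix.vecTail, max_def, Matrix.cons_val_two, Matrix.cons_val_three, Matrix.cons_val_four]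


/-- The dual nef-partition data: `∇ᵢ = Conv({0} ∪ {e ∈ Σ(1) | φᵢ(e) = 1})`, where
the ray generators `Σ(1)` are the vertices of `Δ*` and `φᵢ` is the support
function of `Δᵢ`. -/
noncomputable def Nb19 (i : Fin 2) : Set (V 5) :=
  convexHull ℝ
    ({0} ∪ {e ∈ Set.extremePoints ℝ (polar Δ19) | supp (D19 i) e = 1})

lemma Nb0 : Nb19 0 = convexHull ℝ {0, Rm, Spt 0, Spt 1, Spt 2} := by
  unfold Nb19
  apply Set.Subset.antisymm
  · apply convexHull_min ?_ (convex_convexHull ℝ _)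
    rintro x (hx | hx)
    · exact subset_convexHull ℝ _ (by simpa using Or.inl (by simpa using hx))
    · obtain ⟨hex, hsupp⟩ := hx
      exact convexHull_mono (Set.subset_insert _ _) (face1 hex.1 hsupp)
  · apply convexHull_mono
    rintro x (rfl | rfl | rfl | rfl | rfl)
    · exact Or.inl rfl
    · exact Or.inr ⟨Rm_ext, supp_Rm⟩
    · exact Or.inr ⟨S0_ext, supp_S0⟩
    · exact Or.inr ⟨S1_ext, supp_S1⟩
    · exact Or.inr ⟨S2_ext, supp_S2⟩

lemma Nb1 : Nb19 1 = convexHull ℝ {0, Rp, Tpt 0, Tpt 1, Tpt 2} := by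
  unfold Nb19
  apply Set.Subset.antisymm
  · apply convexHull_min ?_ (convex_convexHull ℝ _)
    rintro x (hx | hx)
    · exact subset_convexHull ℝ _ (by simpa using Or.inl (by simpa using hx))
    · obtain ⟨hex, hsupp⟩ := hx
      exact convexHull_mono (Set.subset_insert _ _) (face2 hex.1 hsupp)
  · apply convexHull_mono
    rintro x (rfl | rfl | rfl | rfl | rfl)
    · exact Or.inl rfl
    · exact Or.inr ⟨Rp_ext, supp_Rp⟩
    · exact Or.inr ⟨T0_ext, supp_T0⟩
    · exact Or.inr ⟨T1_ext, supp_T1⟩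
    · exact Or.inr ⟨T2_ext, supp_T2⟩

lemma part3 :
    Nb19 0 + Nb19 1
      = convexHull ℝ
          ((Set.range fun j : Fin 3 => Rm + Tpt j)
            ∪ (Set.range fun i : Fin 3 => Rp + Spt i)
            ∪ (Set.range fun ij : Fin 3 × Fin 3 => Spt ij.1 + Tpt ij.2)) := by
  rw [Nb0, Nb1, ← convexHull_add]
  set C : Set (V 5) :=
    (Set.range fun j : Fin 3 => Rm + Tpt j)
      ∪ (Set.range fun i : Fin 3 => Rp + Spt i)
      ∪ (Set.range fun ij : Fin 3 × Fin 3 => Spt ij.1 + Tpt ij.2) with hC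
  have hRmTC : ∀ j : Fin 3, Rm + Tpt j ∈ C := fun j => Or.inl (Or.inl ⟨j, rfl⟩)
  have hRpSC : ∀ i : Fin 3, Rp + Spt i ∈ C := fun i => Or.inl (Or.inr ⟨i, rfl⟩)
  have hSTC : ∀ i j : Fin 3, Spt i + Tpt j ∈ C := fun i j => Or.inr ⟨(i, j), rfl⟩
  have hRmT : ∀ j : Fin 3, Rm + Tpt j ∈ convexHull ℝ C :=
    fun j => subset_convexHull ℝ _ (hRmTC j)
  have hRpS : ∀ i : Fin 3, Rp + Spt i ∈ convexHull ℝ C :=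
    fun i => subset_convexHull ℝ _ (hRpSC i)
  have hST : ∀ i j : Fin 3, Spt i + Tpt j ∈ convexHull ℝ C :=
    fun i j => subset_convexHull ℝ _ (hSTC i j)
  have hRm : Rm ∈ convexHull ℝ C := by
    refine mem_hull_combo ![1/3, 1/3, 1/3] (fun j => Rm + Tpt j) C hRmTC
      (by intro i; fin_cases i <;> norm_num)
      (by simp [Fin.sum_univ_three]; norm_num) ?_
    funext r; fin_cases r <;>
      simp [Fin.sum_univ_three, Rm, Tpt, Matrix.vecHead, Matrix.vecTail] <;> ring
  have hRp : Rp ∈ convexHull ℝ C := by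
    refine mem_hull_combo ![1/3, 1/3, 1/3] (fun i => Rp + Spt i) C hRpSC
      (by intro i; fin_cases i <;> norm_num)
      (by simp [Fin.sum_univ_three]; norm_num) ?_
    funext r; fin_cases r <;>
      simp [Fin.sum_univ_three, Rp, Spt, Matrix.vecHead, Matrix.vecTail] <;> ring
  have hS : ∀ i : Fin 3, Spt i ∈ convexHull ℝ C := by
    intro i
    refine mem_hull_combo ![1/3, 1/3, 1/3] (fun j => Spt i + Tpt j) C (fun j => hSTC i j)
      (by intro k; fin_cases k <;> norm_num)
      (by simp [Fin.sum_univ_three]; norm_num) ?_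
    funext r; fin_cases r <;>
      simp [Fin.sum_univ_three, Tpt, Matrix.vecHead, Matrix.vecTail] <;> ring
  have hT : ∀ j : Fin 3, Tpt j ∈ convexHull ℝ C := by
    intro j
    refine mem_hull_combo ![1/3, 1/3, 1/3] (fun i => Spt i + Tpt j) C (fun i => hSTC i j)
      (by intro k; fin_cases k <;> norm_num)
      (by simp [Fin.sum_univ_three]; norm_num) ?_
    funext r; fin_cases r <;>
      simp [Fin.sum_univ_three, Spt, Matrix.vecHead, Matrix.vecTail] <;> ring
  have hRmRp : Rm + Rp = (0 : V 5) := by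
    funext r; fin_cases r <;> simp [Rm, Rp, Matrix.vecHead, Matrix.vecTail]
  have h0 : (0 : V 5) ∈ convexHull ℝ C := by
    have h00 : (0 : V 5) = (1/2 : ℝ) • Rm + (1/2 : ℝ) • Rp := by
      funext r; fin_cases r <;> simp [Rm, Rp, Matrix.vecHead, Matrix.vecTail] <;> norm_num
    rw [h00]
    exact (convex_convexHull ℝ C) hRm hRp (by norm_num) (by norm_num) (by norm_num)
  apply Set.Subset.antisymm
  · apply convexHull_min ?_ (convex_convexHull ℝ _)
    rintro x ⟨a, ha, b, hb, rfl⟩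
    simp only [Set.mem_insert_iff, Set.mem_singleton_iff] at ha hb
    rcases ha with rfl | rfl | rfl | rfl | rfl <;> rcases hb with rfl | rfl | rfl | rfl | rfl <;>
      beta_reduce
    · rw [zero_add]; exact h0
    · rw [zero_add]; exact hRp
    · rw [zero_add]; exact hT 0
    · rw [zero_add]; exact hT 1
    · rw [zero_add]; exact hT 2
    · rw [add_zero]; exact hRm
    · rw [hRmRp]; exact h0
    · exact hRmT 0
    · exact hRmT 1
    · exact hRmT 2
    · rw [add_zero]; exact hS 0
    · rw [add_comm]; exact hRpS 0
    · exact hST 0 0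
    · exact hST 0 1
    · exact hST 0 2
    · rw [add_zero]; exact hS 1
    · rw [add_comm]; exact hRpS 1
    · exact hST 1 0
    · exact hST 1 1
    · exact hST 1 2
    · rw [add_zero]; exact hS 2
    · rw [add_comm]; exact hRpS 2
    · exact hST 2 0
    · exact hST 2 1
    · exact hST 2 2
  · apply convexHull_min ?_ (convex_convexHull ℝ _)
    rintro x ((⟨j, rfl⟩ | ⟨i, rfl⟩) | ⟨ij, rfl⟩)
    · beta_reduce
      exact subset_convexHull ℝ _ (Set.add_mem_add (by simp) (by fin_cases j <;> simp))
    · have e : Rp + Spt i = Spt i + Rp := add_comm _ _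
      beta_reduce
      rw [e]
      exact subset_convexHull ℝ _ (Set.add_mem_add (by fin_cases i <;> simp) (by simp))
    · obtain ⟨i, j⟩ := ij
      beta_reduce
      exact subset_convexHull ℝ _ (Set.add_mem_add (by fin_cases i <;> simp) (by fin_cases j <;> simp))


theorem stmt19 :
    Nb19 0 = convexHull ℝ {0, Rm, Spt 0, Spt 1, Spt 2} ∧
    Nb19 1 = convexHull ℝ {0, Rp, Tpt 0, Tpt 1, Tpt 2} ∧
    Nb19 0 + Nb19 1
      = convexHull ℝ
          ((Set.range fun j : Fin 3 => Rm + Tpt j)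
            ∪ (Set.range fun i : Fin 3 => Rp + Spt i)
            ∪ (Set.range fun ij : Fin 3 × Fin 3 => Spt ij.1 + Tpt ij.2)) := by
  exact ⟨Nb0, Nb1, part3⟩

end BB
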